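/- Let X be a continuous lattice with Scott topology and r(v) = ⋁ v↓. Then r ∘ Φ(r) = r ∘ μ_X as maps Φ²(X) → X, i.e., for every open filter α on Φ(X), ⋁ (Φ(r)(α))↓ = ⋁ (μ_X(α))↓. -/
import Mathlib


open Set TopologicalSpace

variable {X Y : Type*}

/-- An open filter on a topological space: a lattice-theoretic filter of the
frame of open sets (so it contains `univ` and satisfies
`A ∩ B ∈ v ↔ A ∈ v ∧ B ∈ v` for open `A`, `B`). -/
def IsOpenFilter [TopologicalSpace X] (v : Set (Set X)) : Prop :=
  (∀ A ∈ v, IsOpen A) ∧ Set.univ ∈ v ∧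
    ∀ A B : Set X, IsOpen A → IsOpen B → (A ∩ B ∈ v ↔ A ∈ v ∧ B ∈ v)

/-- `Φ(X)`: the set of open filters of `X`, ordered by inclusion. -/
abbrev OF (X : Type*) [TopologicalSpace X] := {v : Set (Set X) // IsOpenFilter v}

/-- The basic open sets `φ(A) = {v ∈ Φ(X) | A ∈ v}` of the filter space. -/
def phi [TopologicalSpace X] (A : Set X) : Set (OF X) := {v : OF X | A ∈ v.1}

/-- The topology on `Φ(X)` generated by the sets `φ(A)`, `A` open. -/
instance OF.topologicalSpace (X : Type*) [TopologicalSpace X] : TopologicalSpace (OF X) :=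
  generateFrom {S | ∃ A : Set X, IsOpen A ∧ S = phi A}

/-- An ideal of a poset: a nonempty directed lower set. -/
def IsIdeal [Preorder X] (I : Set X) : Prop :=
  I.Nonempty ∧ DirectedOn (· ≤ ·) I ∧ IsLowerSet I

/-- The way-below relation on a complete lattice:
`x ≪ y` iff every ideal whose sup dominates `y` contains `x`. -/
def wayBelow [CompleteLattice X] (x y : X) : Prop :=
  ∀ I : Set X, IsIdeal I → y ≤ sSup I → x ∈ I

/-- A continuous lattice: every element is the sup of the elements way below it. -/
def IsContinuousLattice (X : Type*) [CompleteLattice X] : Prop :=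
  ∀ x : X, x = sSup {y | wayBelow y x}

/-- The Scott topology on a complete lattice: open sets are the upper sets
inaccessible by sups of ideals. -/
instance scottTop (X : Type*) [CompleteLattice X] : TopologicalSpace X where
  IsOpen U := IsUpperSet U ∧ ∀ I : Set X, IsIdeal I → sSup I ∈ U → (I ∩ U).Nonempty
  isOpen_univ := ⟨isUpperSet_univ, fun I hI _ => hI.1.imp fun _ ha => ⟨ha, trivial⟩⟩
  isOpen_inter U V hU hV := ⟨hU.1.inter hV.1, fun I hI hs => by
    obtain ⟨a, haI, haU⟩ := hU.2 I hI hs.1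
    obtain ⟨b, hbI, hbV⟩ := hV.2 I hI hs.2
    obtain ⟨c, hcI, hac, hbc⟩ := hI.2.1 a haI b hbI
    exact ⟨c, hcI, hU.1 hac haU, hV.1 hbc hbV⟩⟩
  isOpen_sUnion S hS := ⟨isUpperSet_sUnion fun s hs => (hS s hs).1, fun I hI hm => by
    obtain ⟨U, hU, hsU⟩ := hm
    obtain ⟨a, haI, haU⟩ := (hS U hU).2 I hI hsU
    exact ⟨a, haI, U, hU, haU⟩⟩

/-- `v↓ = ⋃_{A ∈ v} A↓` where `A↓ = {y | A ⊆ ↑y}`. -/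
def downOf [CompleteLattice X] (v : Set (Set X)) : Set X :=
  {y | ∃ A ∈ v, A ⊆ Set.Ici y}

section Aux
variable {X : Type*} [CompleteLattice X]

lemma wayBelow_bot (y : X) : wayBelow ⊥ y := fun I hI _ => by
  obtain ⟨a, ha⟩ := hI.1; exact hI.2.2 bot_le ha

lemma wayBelow_of_wayBelow_of_le {z y w : X} (h1 : wayBelow z y) (h2 : y ≤ w) : wayBelow z w :=
  fun I hI hw => h1 I hI (h2.trans hw)

lemma wayBelow_of_le_of_wayBelow {z y w : X} (h1 : z ≤ y) (h2 : wayBelow y w) : wayBelow z w :=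
  fun I hI hw => hI.2.2 h1 (h2 I hI hw)

lemma wayBelow.le {z y : X} (h1 : wayBelow z y) : z ≤ y := by
  have : z ∈ Set.Iic y := h1 (Set.Iic y)
    ⟨⟨y, le_rfl⟩, fun a ha b hb => ⟨y, le_rfl, ha, hb⟩, fun a b hba ha => hba.trans ha⟩
    (le_sSup le_rfl)
  exact this

lemma wayBelow_sup {a b y : X} (ha : wayBelow a y) (hb : wayBelow b y) :
    wayBelow (a ⊔ b) y := fun I hI hw => by
  obtain ⟨c, hc, hac, hbc⟩ := hI.2.1 a (ha I hI hw) b (hb I hI hw)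
  exact hI.2.2 (sup_le hac hbc) hc

lemma interpolate (h : IsContinuousLattice X) {z y : X} (hzy : wayBelow z y) :
    ∃ w, wayBelow z w ∧ wayBelow w y := by
  set I : Set X := {u | ∃ w, wayBelow u w ∧ wayBelow w y} with hIdef
  have hIdeal : IsIdeal I := by
    refine ⟨⟨⊥, ⊥, wayBelow_bot _, wayBelow_bot _⟩, ?_, ?_⟩
    · rintro a ⟨wa, hawa, hway⟩ b ⟨wb, hbwb, hwby⟩
      exact ⟨a ⊔ b, ⟨wa ⊔ wb,
        wayBelow_sup (wayBelow_of_wayBelow_of_le hawa le_sup_left)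
          (wayBelow_of_wayBelow_of_le hbwb le_sup_right),
        wayBelow_sup hway hwby⟩, le_sup_left, le_sup_right⟩
    · rintro a b hba ⟨w, hw1, hw2⟩
      exact ⟨w, wayBelow_of_le_of_wayBelow hba hw1, hw2⟩
  have hle : y ≤ sSup I := by
    conv_lhs => rw [h y]
    refine sSup_le fun w hw => ?_
    conv_lhs => rw [h w]
    exact sSup_le fun u hu => le_sSup ⟨w, hu, hw⟩
  exact hzy I hIdeal hle

lemma isOpen_wb (h : IsContinuousLattice X) (z : X) : IsOpen {x : X | wayBelow z x} := by
  refine ⟨fun a b hab ha => wayBelow_of_wayBelow_of_le ha hab, fun I hI hs => ?_⟩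
  obtain ⟨w, h1, h2⟩ := interpolate h hs
  exact ⟨w, h2 I hI le_rfl, h1⟩

lemma isIdeal_downOf (v : OF X) : IsIdeal (downOf v.1) := by
  obtain ⟨hop, huniv, hinter⟩ := v.2
  refine ⟨⟨⊥, Set.univ, huniv, fun x _ => bot_le⟩, ?_, ?_⟩
  · rintro a ⟨A, hA, hAa⟩ b ⟨B, hB, hBb⟩
    exact ⟨a ⊔ b, ⟨A ∩ B, (hinter A B (hop A hA) (hop B hB)).2 ⟨hA, hB⟩,
      fun x hx => sup_le (hAa hx.1) (hBb hx.2)⟩, le_sup_left, le_sup_right⟩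
  · rintro a b hba ⟨A, hA, hAa⟩
    exact ⟨A, hA, fun x hx => hba.trans (hAa hx)⟩

lemma OF.mem_of_subset {Y : Type*} [TopologicalSpace Y] (v : OF Y) {A B : Set Y}
    (hB : IsOpen B) (hA : A ∈ v.1) (hAB : A ⊆ B) : B ∈ v.1 := by
  have h1 : A ∩ B ∈ v.1 := by rwa [Set.inter_eq_self_of_subset_left hAB]
  exact ((v.2.2.2 A B (v.2.1 A hA) hB).1 h1).2

lemma isOpen_phi {Y : Type*} [TopologicalSpace Y] {B : Set Y} (hB : IsOpen B) :
    IsOpen (phi B) :=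
  TopologicalSpace.isOpen_generateFrom_of_mem ⟨B, hB, rfl⟩

lemma isOpen_r_preimage_wb (h : IsContinuousLattice X) (z : X) :
    IsOpen ((fun v : OF X => sSup (downOf v.1)) ⁻¹' {x | wayBelow z x}) := by
  have heq : (fun v : OF X => sSup (downOf v.1)) ⁻¹' {x | wayBelow z x}
      = ⋃₀ {S | ∃ B : Set X, (IsOpen B ∧ ∃ w, wayBelow z w ∧ B ⊆ Set.Ici w) ∧ S = phi B} := by
    ext v
    simp only [Set.mem_preimage, Set.mem_sUnion, Set.mem_setOf_eq]
    constructor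
    · intro hv
      obtain ⟨w, h1, h2⟩ := interpolate h hv
      obtain ⟨B, hBv, hBw⟩ := h2 _ (isIdeal_downOf v) le_rfl
      exact ⟨phi B, ⟨B, ⟨v.2.1 B hBv, w, h1, hBw⟩, rfl⟩, hBv⟩
    · rintro ⟨S, ⟨B, ⟨hBo, w, hzw, hBw⟩, rfl⟩, hvB⟩
      exact wayBelow_of_wayBelow_of_le hzw (le_sSup ⟨B, hvB, hBw⟩)
  rw [heq]
  exact isOpen_sUnion (by rintro S ⟨B, ⟨hBo, _⟩, rfl⟩; exact isOpen_phi hBo)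

end Aux

/-- for a continuous lattice with `r(v) = ⋁ v↓`, the algebra law
`r ∘ Φ(r) = r ∘ μ_X` holds: for every open filter `α` on `Φ(X)`,
`⋁ (Φ(r)(α))↓ = ⋁ (μ_X(α))↓`. -/
theorem r_mapOF_eq_r_muOF [CompleteLattice X] (h : IsContinuousLattice X)
    (α : OF (OF X)) :
    sSup (downOf {A : Set X | IsOpen A ∧
        (fun v : OF X => sSup (downOf v.1)) ⁻¹' A ∈ α.1}) =
      sSup (downOf {A : Set X | IsOpen A ∧ phi A ∈ α.1}) := by
  apply le_antisymm
  · refine sSup_le ?_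
    rintro y ⟨A, ⟨hAo, hrA⟩, hAy⟩
    have : y = sSup {z | wayBelow z y} := h y
    rw [this]
    refine sSup_le fun z hz => le_sSup ?_
    -- z ≪ y ; show z ∈ downOf {A | IsOpen A ∧ phi A ∈ α.1}
    refine ⟨{x | wayBelow z x}, ⟨isOpen_wb h z, ?_⟩, fun x hx => hx.le⟩
    -- show phi {x | wayBelow z x} ∈ α.1
    refine OF.mem_of_subset α (isOpen_phi (isOpen_wb h z)) hrA ?_
    intro v hv
    -- hv : sSup (downOf v.1) ∈ A
    have hyr : y ≤ sSup (downOf v.1) := hAy hv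
    have hz' : wayBelow z (sSup (downOf v.1)) := wayBelow_of_wayBelow_of_le hz hyr
    obtain ⟨w, h1, h2⟩ := interpolate h hz'
    obtain ⟨B, hBv, hBw⟩ := h2 _ (isIdeal_downOf v) le_rfl
    exact OF.mem_of_subset v (isOpen_wb h z) hBv
      (fun x hx => wayBelow_of_wayBelow_of_le h1 (hBw hx))
  · refine sSup_le ?_
    rintro y ⟨A, ⟨hAo, hφA⟩, hAy⟩
    have : y = sSup {z | wayBelow z y} := h y
    rw [this]
    refine sSup_le fun z hz => le_sSup ?_
    refine ⟨{x | wayBelow z x}, ⟨isOpen_wb h z, ?_⟩, fun x hx => hx.le⟩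
    refine OF.mem_of_subset α (isOpen_r_preimage_wb h z) hφA ?_
    intro v hv
    -- hv : A ∈ v.1 ; show wayBelow z (sSup (downOf v.1))
    have hyr : y ≤ sSup (downOf v.1) := le_sSup ⟨A, hv, hAy⟩
    exact wayBelow_of_wayBelow_of_le hz hyr
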